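/- The map R ↦ ‖R - K‖_F^2 + λ‖R^-‖_1 + γΣ_i(σ_i(R) - σ̄_R)^2, restricted to symmetric matrices with tr(R) = p, is a convex function of R. -/

import Mathlib

open Matrix Finset

lemma aux_sum_eig {p : ℕ} {A : Matrix (Fin p) (Fin p) ℝ} (hA : A.IsHermitian) :
    ∑ i, hA.eigenvalues i = A.trace := by
  have h1 : star (hA.eigenvectorUnitary : Matrix (Fin p) (Fin p) ℝ) *
      (hA.eigenvectorUnitary : Matrix (Fin p) (Fin p) ℝ) = 1 :=
    (Matrix.mem_unitaryGroup_iff').mp hA.eigenvectorUnitary.2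
  conv_rhs => rw [hA.spectral_theorem, Unitary.conjStarAlgAut_apply]
  rw [Matrix.trace_mul_cycle, h1, one_mul]
  simp [Matrix.trace_diagonal, RCLike.ofReal_real_eq_id]

lemma aux_sq_eig {p : ℕ} {A : Matrix (Fin p) (Fin p) ℝ} (hA : A.IsHermitian) :
    ∑ i, hA.eigenvalues i ^ 2 = ∑ i, ∑ j, (A i j) ^ 2 := by
  have h1 : star (hA.eigenvectorUnitary : Matrix (Fin p) (Fin p) ℝ) *
      (hA.eigenvectorUnitary : Matrix (Fin p) (Fin p) ℝ) = 1 :=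
    (Matrix.mem_unitaryGroup_iff').mp hA.eigenvectorUnitary.2
  set U : Matrix (Fin p) (Fin p) ℝ := (hA.eigenvectorUnitary : Matrix (Fin p) (Fin p) ℝ) with hU
  set D : Matrix (Fin p) (Fin p) ℝ := diagonal (RCLike.ofReal ∘ hA.eigenvalues) with hD
  have hAA : A * A = U * (D * D) * star U := by
    conv_lhs => rw [hA.spectral_theorem, Unitary.conjStarAlgAut_apply]
    rw [show (U * D * star U) * (U * D * star U) = U * (D * (star U * U) * D) * star U by
      simp only [mul_assoc], h1]
    simp [mul_assoc]
  have htr : (A * A).trace = ∑ i, hA.eigenvalues i ^ 2 := by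
    rw [hAA, Matrix.trace_mul_cycle, ← mul_assoc, h1, one_mul, hD,
      Matrix.diagonal_mul_diagonal]
    simp [Matrix.trace_diagonal, RCLike.ofReal_real_eq_id, sq]
  have htr2 : (A * A).trace = ∑ i, ∑ j, (A i j) ^ 2 := by
    rw [Matrix.trace]
    simp only [Matrix.diag, Matrix.mul_apply]
    refine Finset.sum_congr rfl fun i _ => Finset.sum_congr rfl fun j _ => ?_
    have := hA.apply j i
    simp only [star] at this
    rw [sq]
    rw [show A j i = A i j from hA.apply j i ▸ rfl]
  rw [← htr, htr2]

theorem jpen_objective_convex (p : ℕ) (K : Matrix (Fin p) (Fin p) ℝ)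
    (hK : K.IsSymm) (lam gam : ℝ) (hlam : 0 < lam) (hgam : 0 < gam) :
    ConvexOn ℝ
      {R : Matrix (Fin p) (Fin p) ℝ | R.IsHermitian ∧ R.trace = (p : ℝ)}
      (fun R =>
        (∑ i, ∑ j, (R i j - K i j) ^ 2)
          + lam * (∑ i, ∑ j, if i ≠ j then |R i j| else 0)
          + gam * (if h : R.IsHermitian then
              ∑ i, (h.eigenvalues i - (∑ j, h.eigenvalues j) / p) ^ 2
            else 0)) := by
  set S : Set (Matrix (Fin p) (Fin p) ℝ) :=
    {R : Matrix (Fin p) (Fin p) ℝ | R.IsHermitian ∧ R.trace = (p : ℝ)} with hSdef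
  have hS : Convex ℝ S := by
    intro x hx y hy a b ha hb hab
    refine ⟨?_, ?_⟩
    · simp only [Matrix.IsHermitian, conjTranspose_add, conjTranspose_smul]
      rw [show star a = a from rfl, show star b = b from rfl, hx.1.eq, hy.1.eq]
    · rw [trace_add, trace_smul, trace_smul, hx.2, hy.2, smul_eq_mul, smul_eq_mul]
      linear_combination (p : ℝ) * hab
  have key : ∀ (a b u v : ℝ), 0 ≤ a → 0 ≤ b → a + b = 1 →
      (a * u + b * v) ^ 2 ≤ a * u ^ 2 + b * v ^ 2 := by
    intro a b u v ha hb hab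
    nlinarith [mul_nonneg ha hb, sq_nonneg (u - v)]
  have hg : ConvexOn ℝ S (fun R : Matrix (Fin p) (Fin p) ℝ =>
      (∑ i, ∑ j, (R i j - K i j) ^ 2)
        + lam * (∑ i, ∑ j, if i ≠ j then |R i j| else 0)
        + gam * ((∑ i, ∑ j, (R i j) ^ 2) - p)) := by
    refine ⟨hS, fun x hx y hy a b ha hb hab => ?_⟩
    have hentry : ∀ i j, (a • x + b • y) i j = a * x i j + b * y i j := by
      intro i j; simp [Matrix.add_apply, Matrix.smul_apply]
    have H1 : (∑ i, ∑ j, ((a • x + b • y) i j - K i j) ^ 2)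
        ≤ a * (∑ i, ∑ j, (x i j - K i j) ^ 2) + b * (∑ i, ∑ j, (y i j - K i j) ^ 2) := by
      simp only [Finset.mul_sum, ← Finset.sum_add_distrib]
      refine Finset.sum_le_sum fun i _ => Finset.sum_le_sum fun j _ => ?_
      rw [hentry]
      have heq : a * x i j + b * y i j - K i j
          = a * (x i j - K i j) + b * (y i j - K i j) := by
        linear_combination (K i j) * hab
      rw [heq]
      exact key a b _ _ ha hb hab
    have H2 : (∑ i, ∑ j, if i ≠ j then |(a • x + b • y) i j| else 0)
        ≤ a * (∑ i, ∑ j, if i ≠ j then |x i j| else 0)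
          + b * (∑ i, ∑ j, if i ≠ j then |y i j| else 0) := by
      simp only [Finset.mul_sum, ← Finset.sum_add_distrib]
      refine Finset.sum_le_sum fun i _ => Finset.sum_le_sum fun j _ => ?_
      by_cases hij : i ≠ j
      · simp only [if_pos hij, hentry]
        calc |a * x i j + b * y i j| ≤ |a * x i j| + |b * y i j| := abs_add_le _ _
          _ = a * |x i j| + b * |y i j| := by
              rw [abs_mul, abs_mul, abs_of_nonneg ha, abs_of_nonneg hb]
      · simp [hij]
    have H3 : ((∑ i, ∑ j, ((a • x + b • y) i j) ^ 2) - (p : ℝ))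
        ≤ a * ((∑ i, ∑ j, (x i j) ^ 2) - p) + b * ((∑ i, ∑ j, (y i j) ^ 2) - p) := by
      have h0 : (∑ i, ∑ j, ((a • x + b • y) i j) ^ 2)
          ≤ a * (∑ i, ∑ j, (x i j) ^ 2) + b * (∑ i, ∑ j, (y i j) ^ 2) := by
        simp only [Finset.mul_sum, ← Finset.sum_add_distrib]
        refine Finset.sum_le_sum fun i _ => Finset.sum_le_sum fun j _ => ?_
        rw [hentry]
        exact key a b _ _ ha hb hab
      have : a * (p : ℝ) + b * p = p := by linear_combination (p : ℝ) * hab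
      nlinarith
    simp only [smul_eq_mul]
    have h2' := mul_le_mul_of_nonneg_left H2 hlam.le
    have h3' := mul_le_mul_of_nonneg_left H3 hgam.le
    linarith
  refine hg.congr fun R hR => ?_
  have hRh : R.IsHermitian := hR.1
  have hRt : R.trace = (p : ℝ) := hR.2
  have hsum : ∑ j, hRh.eigenvalues j = (p : ℝ) := by rw [aux_sum_eig hRh, hRt]
  rw [dif_pos hRh]
  beta_reduce
  congr 1
  congr 1
  rw [← aux_sq_eig hRh, hsum]
  rcases Nat.eq_zero_or_pos p with hp | hp
  · subst hp
    simp
  · have hp' : (p : ℝ) ≠ 0 := Nat.cast_ne_zero.mpr hp.ne'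
    rw [div_self hp']
    have hexp : ∑ i, (hRh.eigenvalues i - 1) ^ 2
        = (∑ i, hRh.eigenvalues i ^ 2) - 2 * (∑ i, hRh.eigenvalues i) + p := by
      have h2 : ∀ i ∈ (univ : Finset (Fin p)), (hRh.eigenvalues i - 1) ^ 2
          = hRh.eigenvalues i ^ 2 - 2 * hRh.eigenvalues i + 1 := fun i _ => by ring
      rw [Finset.sum_congr rfl h2, Finset.sum_add_distrib, Finset.sum_sub_distrib,
        ← Finset.mul_sum, Finset.sum_const, Finset.card_univ, Fintype.card_fin,
        nsmul_eq_mul, mul_one]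
    rw [hexp, hsum]
    ring
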